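/- Let G be a group with two characters χ, χ_φ: G → ℂ^× and let φ(x,z) = exp(z p(x) d/dx)·x for some nonzero p(x) ∈ ℂ((x)). If the compatibility condition φ(z, χ(g)z₀) = χ_φ(g)·φ(χ_φ(g)⁻¹z, z₀) holds for all g ∈ G, then equivalently p(χ_φ(g)z) = χ(g)⁻¹χ_φ(g)·p(z) for all g ∈ G. In particular, when φ(x,z) = xe^z (i.e., p(x) = x), the compatibility condition forces χ to be the trivial character. -/

import Mathlib

open scoped BigOperators

/-- Let `G` be a group with characters `χ, χ_φ : G → ℂˣ`, let `p(x) = ∑ p n x^n` be a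
nonzero Laurent series, and let `φ(x,z) = exp(z p(x) d/dx)·x = ∑_k φ_k(x) z^k`, encoded by
`φ 0 = x` and `(k+1) φ_{k+1} = p·(φ_k)'`.  If the compatibility condition
`φ(x, χ(g)z) = χ_φ(g)·φ(χ_φ(g)⁻¹x, z)` holds (coefficientwise) for all `g ∈ G`, then
equivalently `p(χ_φ(g)x) = χ(g)⁻¹χ_φ(g)·p(x)` for all `g`.  In particular, when
`p(x) = x` (i.e. `φ(x,z) = x e^z`), the compatibility condition forces `χ` to be trivial. -/
theorem stmt19 (G : Type*) [Group G] (χ χφ : G →* ℂˣ)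
    (p : ℤ → ℂ) (hp : p ≠ 0) (hpsupp : ∃ N : ℤ, ∀ n < N, p n = 0)
    (φ : ℕ → ℤ → ℂ)
    (hφsupp : ∀ k : ℕ, ∃ N : ℤ, ∀ n < N, φ k n = 0)
    (hφ0 : ∀ n : ℤ, φ 0 n = if n = 1 then 1 else 0)
    (hφrec : ∀ (k : ℕ) (n : ℤ),
      ((k : ℂ) + 1) * φ (k + 1) n = ∑ᶠ m : ℤ, p m * (((n - m + 1 : ℤ) : ℂ) * φ k (n - m + 1))) :
    ((∀ (g : G) (k : ℕ) (n : ℤ),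
        ((χ g : ℂ)) ^ k * φ k n = (χφ g : ℂ) * ((χφ g : ℂ)⁻¹) ^ n * φ k n)
      ↔ (∀ (g : G) (n : ℤ), ((χφ g : ℂ)) ^ n * p n = ((χ g : ℂ))⁻¹ * (χφ g : ℂ) * p n)) ∧
    ((∀ n : ℤ, p n = if n = 1 then 1 else 0) →
      (∀ (g : G) (k : ℕ) (n : ℤ),
        ((χ g : ℂ)) ^ k * φ k n = (χφ g : ℂ) * ((χφ g : ℂ)⁻¹) ^ n * φ k n) →
      ∀ g : G, χ g = 1) := by
  -- φ 1 = p.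
  have hφ1 : ∀ n : ℤ, φ 1 n = p n := by
    intro n
    have h := hφrec 0 n
    have hsingle : ∑ᶠ m : ℤ, p m * (((n - m + 1 : ℤ) : ℂ) * φ 0 (n - m + 1))
        = p n * (((n - n + 1 : ℤ) : ℂ) * φ 0 (n - n + 1)) := by
      refine finsum_eq_single _ n ?_
      intro m hm
      have h1 : φ 0 (n - m + 1) = 0 := by
        rw [hφ0]
        have : n - m + 1 ≠ 1 := by omega
        simp [this]
      simp [h1]
    rw [hsingle] at h
    have h0 : n - n + 1 = (1 : ℤ) := by ring
    rw [h0, hφ0] at h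
    simpa using h
  -- finite support of the summand
  have hfin : ∀ (k : ℕ) (n : ℤ),
      (Function.support fun m : ℤ => p m * (((n - m + 1 : ℤ) : ℂ) * φ k (n - m + 1))).Finite := by
    intro k n
    obtain ⟨N, hN⟩ := hpsupp
    obtain ⟨M, hM⟩ := hφsupp k
    apply Set.Finite.subset (Set.finite_Icc N (n + 1 - M))
    intro m hm
    simp only [Function.mem_support] at hm
    constructor
    · by_contra h
      exact hm (by rw [hN m (by omega)]; ring)
    · by_contra h
      exact hm (by rw [hM (n - m + 1) (by omega)]; ring)
  -- forward direction
  have fwd : (∀ (g : G) (k : ℕ) (n : ℤ),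
        ((χ g : ℂ)) ^ k * φ k n = (χφ g : ℂ) * ((χφ g : ℂ)⁻¹) ^ n * φ k n) →
      (∀ (g : G) (n : ℤ), ((χφ g : ℂ)) ^ n * p n = ((χ g : ℂ))⁻¹ * (χφ g : ℂ) * p n) := by
    intro H g n
    have h := H g 1 n
    rw [hφ1] at h
    by_cases hpn : p n = 0
    · simp [hpn]
    have hc : (χ g : ℂ) ≠ 0 := Units.ne_zero _
    have hd : (χφ g : ℂ) ≠ 0 := Units.ne_zero _
    have hdz : ((χφ g : ℂ)) ^ n ≠ 0 := zpow_ne_zero _ hd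
    have h' : (χ g : ℂ) = (χφ g : ℂ) * ((χφ g : ℂ)⁻¹) ^ n := by
      have h'' := mul_right_cancel₀ hpn h
      rwa [pow_one] at h''
    have hinv : ((χφ g : ℂ)⁻¹) ^ n = ((χφ g : ℂ) ^ n)⁻¹ := inv_zpow _ _
    rw [hinv] at h'
    rw [h']
    field_simp
  -- reverse direction
  have bwd : (∀ (g : G) (n : ℤ), ((χφ g : ℂ)) ^ n * p n = ((χ g : ℂ))⁻¹ * (χφ g : ℂ) * p n) →
      (∀ (g : G) (k : ℕ) (n : ℤ),
        ((χ g : ℂ)) ^ k * φ k n = (χφ g : ℂ) * ((χφ g : ℂ)⁻¹) ^ n * φ k n) := by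
    intro H g k
    have hc : (χ g : ℂ) ≠ 0 := Units.ne_zero _
    have hd : (χφ g : ℂ) ≠ 0 := Units.ne_zero _
    have hdi : ((χφ g : ℂ)⁻¹) ≠ 0 := inv_ne_zero hd
    -- key pointwise fact about p
    have hP : ∀ m : ℤ, (χ g : ℂ) * p m = (χφ g : ℂ) * ((χφ g : ℂ)⁻¹) ^ m * p m := by
      intro m
      have h := H g m
      by_cases hpm : p m = 0
      · simp [hpm]
      have h' : (χφ g : ℂ) ^ m = (χ g : ℂ)⁻¹ * (χφ g : ℂ) := mul_right_cancel₀ hpm h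
      have h2 : ((χφ g : ℂ)⁻¹) ^ m = ((χφ g : ℂ) ^ m)⁻¹ := inv_zpow _ _
      rw [h2, h']
      field_simp
    induction k with
    | zero =>
      intro n
      rw [hφ0]
      by_cases hn : n = 1
      · subst hn
        simp [zpow_one, mul_inv_cancel₀ hd]
      · simp [hn]
    | succ k ih =>
      intro n
      have hcancel : ((k : ℂ) + 1) ≠ 0 := Nat.cast_add_one_ne_zero k
      apply mul_left_cancel₀ hcancel
      calc ((k : ℂ) + 1) * ((χ g : ℂ) ^ (k + 1) * φ (k + 1) n)
          = (χ g : ℂ) ^ (k + 1) * (((k : ℂ) + 1) * φ (k + 1) n) := by ring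
        _ = (χ g : ℂ) ^ (k + 1) *
            ∑ᶠ m : ℤ, p m * (((n - m + 1 : ℤ) : ℂ) * φ k (n - m + 1)) := by rw [hφrec]
        _ = ∑ᶠ m : ℤ, (χ g : ℂ) ^ (k + 1) *
            (p m * (((n - m + 1 : ℤ) : ℂ) * φ k (n - m + 1))) := mul_finsum _ _
        _ = ∑ᶠ m : ℤ, (χφ g : ℂ) * ((χφ g : ℂ)⁻¹) ^ n *
            (p m * (((n - m + 1 : ℤ) : ℂ) * φ k (n - m + 1))) := by
            refine finsum_congr fun m => ?_
            have h1 := hP m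
            have h2 := ih (n - m + 1)
            have hz : (χφ g : ℂ) * (χφ g : ℂ) *
                (((χφ g : ℂ)⁻¹) ^ m * ((χφ g : ℂ)⁻¹) ^ (n - m + 1))
                = (χφ g : ℂ) * ((χφ g : ℂ)⁻¹) ^ n := by
              rw [← zpow_add₀ hdi]
              have hm : m + (n - m + 1) = n + 1 := by ring
              rw [hm, zpow_add₀ hdi, zpow_one]
              have e1 : (χφ g : ℂ) * (χφ g : ℂ)⁻¹ = 1 := mul_inv_cancel₀ hd
              linear_combination ((χφ g : ℂ) * ((χφ g : ℂ)⁻¹) ^ n) * e1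
            calc (χ g : ℂ) ^ (k + 1) * (p m * (((n - m + 1 : ℤ) : ℂ) * φ k (n - m + 1)))
                = ((χ g : ℂ) * p m) * (((χ g : ℂ) ^ k * φ k (n - m + 1)) *
                    ((n - m + 1 : ℤ) : ℂ)) := by rw [pow_succ]; ring
              _ = ((χφ g : ℂ) * ((χφ g : ℂ)⁻¹) ^ m * p m) *
                  (((χφ g : ℂ) * ((χφ g : ℂ)⁻¹) ^ (n - m + 1) * φ k (n - m + 1)) *
                    ((n - m + 1 : ℤ) : ℂ)) := by rw [h1, h2]
              _ = ((χφ g : ℂ) * (χφ g : ℂ) *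
                    (((χφ g : ℂ)⁻¹) ^ m * ((χφ g : ℂ)⁻¹) ^ (n - m + 1))) *
                  (p m * (((n - m + 1 : ℤ) : ℂ) * φ k (n - m + 1))) := by ring
              _ = (χφ g : ℂ) * ((χφ g : ℂ)⁻¹) ^ n *
                  (p m * (((n - m + 1 : ℤ) : ℂ) * φ k (n - m + 1))) := by rw [hz]
        _ = (χφ g : ℂ) * ((χφ g : ℂ)⁻¹) ^ n *
            ∑ᶠ m : ℤ, p m * (((n - m + 1 : ℤ) : ℂ) * φ k (n - m + 1)) :=
            (mul_finsum _ _).symm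
        _ = (χφ g : ℂ) * ((χφ g : ℂ)⁻¹) ^ n * (((k : ℂ) + 1) * φ (k + 1) n) := by rw [hφrec]
        _ = ((k : ℂ) + 1) * ((χφ g : ℂ) * ((χφ g : ℂ)⁻¹) ^ n * φ (k + 1) n) := by ring
  refine ⟨⟨fwd, bwd⟩, ?_⟩
  intro hpδ H g
  have h := fwd H g 1
  rw [hpδ 1] at h
  have hc : (χ g : ℂ) ≠ 0 := Units.ne_zero _
  have hd : (χφ g : ℂ) ≠ 0 := Units.ne_zero _
  norm_num at h
  exact h
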